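/- Let P and Δ be real-valued random variables with finite second moments such that 0 ≤ P ≤ m_φ almost surely, |Δ| ≤ m_Δ almost surely, and Var(P) ≤ k·Var(Δ) for some constants m_φ, m_Δ, k ≥ 0. Then the random variable S = P·Δ satisfies √Var(S) ≤ (2·m_φ + √k·m_Δ)·√Var(Δ). -/

import Mathlib

open MeasureTheory ProbabilityTheory

section Aux

variable {α : Type*} {m : MeasurableSpace α} {μ : Measure α}

/-- Cauchy–Schwarz for integrals. -/
lemma integral_mul_le_sqrt_mul_sqrt (f g : α → ℝ) (hf : MemLp f 2 μ) (hg : MemLp g 2 μ) :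
    ∫ a, f a * g a ∂μ
      ≤ Real.sqrt (∫ a, f a ^ 2 ∂μ) * Real.sqrt (∫ a, g a ^ 2 ∂μ) := by
  set F : Lp ℝ 2 μ := hf.toLp f
  set G : Lp ℝ 2 μ := hg.toLp g
  have h1 : (inner ℝ F G : ℝ) = ∫ a, f a * g a ∂μ := by
    rw [L2.inner_def]
    refine integral_congr_ae ?_
    filter_upwards [hf.coeFn_toLp, hg.coeFn_toLp] with a ha hb
    simp [F, G, ha, hb, RCLike.inner_apply, mul_comm]
  have h2 : ‖F‖ ^ 2 = ∫ a, f a ^ 2 ∂μ := by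
    rw [← real_inner_self_eq_norm_sq, L2.inner_def]
    refine integral_congr_ae ?_
    filter_upwards [hf.coeFn_toLp] with a ha
    simp [F, ha, RCLike.inner_apply, sq]
  have h3 : ‖G‖ ^ 2 = ∫ a, g a ^ 2 ∂μ := by
    rw [← real_inner_self_eq_norm_sq, L2.inner_def]
    refine integral_congr_ae ?_
    filter_upwards [hg.coeFn_toLp] with a ha
    simp [G, ha, RCLike.inner_apply, sq]
  calc ∫ a, f a * g a ∂μ = (inner ℝ F G : ℝ) := h1.symm
    _ ≤ ‖F‖ * ‖G‖ := real_inner_le_norm F G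
    _ = Real.sqrt (∫ a, f a ^ 2 ∂μ) * Real.sqrt (∫ a, g a ^ 2 ∂μ) := by
        rw [← h2, ← h3, Real.sqrt_sq (norm_nonneg F), Real.sqrt_sq (norm_nonneg G)]

/-- L² triangle inequality in integral form. -/
lemma sqrt_integral_add_sq_le (f g : α → ℝ) (hf : MemLp f 2 μ) (hg : MemLp g 2 μ) :
    Real.sqrt (∫ a, (f a + g a) ^ 2 ∂μ)
      ≤ Real.sqrt (∫ a, f a ^ 2 ∂μ) + Real.sqrt (∫ a, g a ^ 2 ∂μ) := by
  have hf2 : Integrable (fun a => f a ^ 2) μ := hf.integrable_sq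
  have hg2 : Integrable (fun a => g a ^ 2) μ := hg.integrable_sq
  have hfg : Integrable (fun a => f a * g a) μ := by
    have h : Integrable (fun a => (1/2 : ℝ) * (((f a + g a) ^ 2 - f a ^ 2) - g a ^ 2)) μ :=
      (((hf.add hg).integrable_sq.sub hf.integrable_sq).sub hg.integrable_sq).const_mul _
    exact h.congr (Filter.Eventually.of_forall fun a => by ring)
  have hCS := integral_mul_le_sqrt_mul_sqrt f g hf hg
  have hfnn : 0 ≤ ∫ a, f a ^ 2 ∂μ := integral_nonneg fun a => sq_nonneg _
  have hgnn : 0 ≤ ∫ a, g a ^ 2 ∂μ := integral_nonneg fun a => sq_nonneg _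
  have hexp : ∫ a, (f a + g a) ^ 2 ∂μ
      = (∫ a, f a ^ 2 ∂μ) + 2 * (∫ a, f a * g a ∂μ) + ∫ a, g a ^ 2 ∂μ := by
    have : ∀ a, (f a + g a) ^ 2 = (f a ^ 2 + 2 * (f a * g a)) + g a ^ 2 := by
      intro a; ring
    simp_rw [this]
    have hB : Integrable (fun a => 2 * (f a * g a)) μ := hfg.const_mul 2
    have hA : Integrable (fun a => f a ^ 2 + 2 * (f a * g a)) μ := hf2.add hB
    rw [integral_add hA hg2, integral_add hf2 hB, integral_const_mul]
  have key : ∫ a, (f a + g a) ^ 2 ∂μ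
      ≤ (Real.sqrt (∫ a, f a ^ 2 ∂μ) + Real.sqrt (∫ a, g a ^ 2 ∂μ)) ^ 2 := by
    rw [hexp, add_sq, Real.sq_sqrt hfnn, Real.sq_sqrt hgnn]
    nlinarith [hCS]
  calc Real.sqrt (∫ a, (f a + g a) ^ 2 ∂μ)
      ≤ Real.sqrt ((Real.sqrt (∫ a, f a ^ 2 ∂μ) + Real.sqrt (∫ a, g a ^ 2 ∂μ)) ^ 2) :=
        Real.sqrt_le_sqrt key
    _ = Real.sqrt (∫ a, f a ^ 2 ∂μ) + Real.sqrt (∫ a, g a ^ 2 ∂μ) :=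
        Real.sqrt_sq (by positivity)

/-- The variance is at most the second moment about any point. -/
lemma variance_le_integral_sub_sq [IsProbabilityMeasure μ] {X : α → ℝ}
    (hX : MemLp X 2 μ) (c : ℝ) :
    variance X μ ≤ ∫ a, (X a - c) ^ 2 ∂μ := by
  have h1 : Integrable (fun a => X a ^ 2) μ := hX.integrable_sq
  have h2 : Integrable X μ := hX.integrable one_le_two
  have hexp : ∫ a, (X a - c) ^ 2 ∂μ
      = (∫ a, X a ^ 2 ∂μ) - 2 * c * (∫ a, X a ∂μ) + c ^ 2 := by
    have : ∀ a, (X a - c) ^ 2 = (X a ^ 2 - 2 * c * X a) + c ^ 2 := by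
      intro a; ring
    simp_rw [this]
    have hB : Integrable (fun a => 2 * c * X a) μ := h2.const_mul _
    have hA : Integrable (fun a => X a ^ 2 - 2 * c * X a) μ := h1.sub hB
    rw [integral_add hA (integrable_const _), integral_sub h1 hB, integral_const_mul,
      integral_const]
    simp
  have hvar : variance X μ = (∫ a, X a ^ 2 ∂μ) - (∫ a, X a ∂μ) ^ 2 := by
    rw [variance_eq_sub hX]
    rfl
  rw [hvar, hexp]
  nlinarith [sq_nonneg ((∫ a, X a ∂μ) - c)]

end Aux

/-- Key variance bound: if `0 ≤ P ≤ m_φ` a.s., `|Δ| ≤ m_Δ` a.s., and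
`Var P ≤ k · Var Δ`, then `√Var(P·Δ) ≤ (2 m_φ + √k · m_Δ) · √Var Δ`. -/
theorem sqrt_variance_mul_le {Ω : Type*} [MeasureSpace Ω]
    [IsProbabilityMeasure (ℙ : Measure Ω)]
    (P Δ : Ω → ℝ) (hP : MemLp P 2 ℙ) (hΔ : MemLp Δ 2 ℙ)
    (mφ mΔ k : ℝ) (hmφ : 0 ≤ mφ) (hmΔ : 0 ≤ mΔ) (hk : 0 ≤ k)
    (hPbd : ∀ᵐ ω ∂ℙ, 0 ≤ P ω ∧ P ω ≤ mφ)
    (hΔbd : ∀ᵐ ω ∂ℙ, |Δ ω| ≤ mΔ)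
    (hvar : variance P ℙ ≤ k * variance Δ ℙ) :
    Real.sqrt (variance (fun ω => P ω * Δ ω) ℙ)
      ≤ (2 * mφ + Real.sqrt k * mΔ) * Real.sqrt (variance Δ ℙ) := by
  set EP : ℝ := ∫ ω, P ω ∂ℙ with hEP
  set EΔ : ℝ := ∫ ω, Δ ω ∂ℙ with hEΔ
  -- the two pieces of the decomposition
  set f : Ω → ℝ := fun ω => P ω * (Δ ω - EΔ) with hfdef
  set g : Ω → ℝ := fun ω => EΔ * (P ω - EP) with hgdef
  have hΔ' : MemLp (fun ω => Δ ω - EΔ) 2 ℙ := hΔ.sub (memLp_const EΔ)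
  have hP' : MemLp (fun ω => P ω - EP) 2 ℙ := hP.sub (memLp_const EP)
  have hEΔbd : |EΔ| ≤ mΔ := by
    calc |EΔ| ≤ ∫ ω, |Δ ω| ∂ℙ := by
          simpa [Real.norm_eq_abs] using
            norm_integral_le_integral_norm (f := Δ) (μ := (ℙ : Measure Ω))
      _ ≤ ∫ ω, mΔ ∂ℙ := by
          refine integral_mono_ae (hΔ.integrable one_le_two).abs (integrable_const _) hΔbd
      _ = mΔ := by simp
  -- MemLp of the pieces
  have hSmeas : AEStronglyMeasurable (fun ω => P ω * Δ ω) ℙ :=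
    hP.aestronglyMeasurable.mul hΔ.aestronglyMeasurable
  have hS : MemLp (fun ω => P ω * Δ ω) 2 ℙ := by
    refine MemLp.of_bound hSmeas (mφ * mΔ) ?_
    filter_upwards [hPbd, hΔbd] with ω h1 h2
    rw [Real.norm_eq_abs, abs_mul]
    exact mul_le_mul (by rw [abs_of_nonneg h1.1]; exact h1.2) h2 (abs_nonneg _) hmφ
  have hf : MemLp f 2 ℙ := by
    refine MemLp.of_bound
      (hP.aestronglyMeasurable.mul (hΔ.aestronglyMeasurable.sub aestronglyMeasurable_const))
      (mφ * (mΔ + |EΔ|)) ?_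
    filter_upwards [hPbd, hΔbd] with ω h1 h2
    rw [Real.norm_eq_abs, hfdef, abs_mul]
    refine mul_le_mul (by rw [abs_of_nonneg h1.1]; exact h1.2) ?_ (abs_nonneg _) hmφ
    calc |Δ ω - EΔ| ≤ |Δ ω| + |EΔ| := abs_sub _ _
      _ ≤ mΔ + |EΔ| := by linarith
  have hg : MemLp g 2 ℙ := hP'.const_mul EΔ
  -- variance of PΔ is at most the second moment about EP * EΔ
  have step1 : variance (fun ω => P ω * Δ ω) ℙ ≤ ∫ ω, (f ω + g ω) ^ 2 ∂ℙ := by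
    have hdecomp : ∀ ω, P ω * Δ ω - EP * EΔ = f ω + g ω := by
      intro ω; simp only [hfdef, hgdef]; ring
    calc variance (fun ω => P ω * Δ ω) ℙ
        ≤ ∫ ω, (P ω * Δ ω - EP * EΔ) ^ 2 ∂ℙ :=
          variance_le_integral_sub_sq hS (EP * EΔ)
      _ = ∫ ω, (f ω + g ω) ^ 2 ∂ℙ := by simp_rw [hdecomp]
  -- bound √∫f², √∫g²
  have hVarΔ : variance Δ ℙ = ∫ ω, (Δ ω - EΔ) ^ 2 ∂ℙ := by
    rw [variance_eq_integral hΔ.aestronglyMeasurable.aemeasurable]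
  have hVarP : variance P ℙ = ∫ ω, (P ω - EP) ^ 2 ∂ℙ := by
    rw [variance_eq_integral hP.aestronglyMeasurable.aemeasurable]
  have hfbd : ∫ ω, f ω ^ 2 ∂ℙ ≤ mφ ^ 2 * variance Δ ℙ := by
    rw [hVarΔ, ← integral_const_mul]
    refine integral_mono_ae hf.integrable_sq ((hΔ'.integrable_sq).const_mul _) ?_
    filter_upwards [hPbd] with ω h1
    simp only [hfdef, mul_pow]
    have : P ω ^ 2 ≤ mφ ^ 2 := by nlinarith [h1.1, h1.2]
    nlinarith [sq_nonneg (Δ ω - EΔ)]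
  have hgbd : ∫ ω, g ω ^ 2 ∂ℙ ≤ mΔ ^ 2 * (k * variance Δ ℙ) := by
    have : ∫ ω, g ω ^ 2 ∂ℙ = EΔ ^ 2 * variance P ℙ := by
      rw [hVarP, ← integral_const_mul]
      refine integral_congr_ae (Filter.Eventually.of_forall fun ω => ?_)
      simp only [hgdef]; ring
    rw [this]
    have hEΔsq : EΔ ^ 2 ≤ mΔ ^ 2 := by
      have := abs_nonneg EΔ
      nlinarith [sq_abs EΔ]
    have h0 : 0 ≤ variance P ℙ := variance_nonneg _ _
    nlinarith [variance_nonneg Δ (ℙ : Measure Ω)]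
  have hsqrtf : Real.sqrt (∫ ω, f ω ^ 2 ∂ℙ) ≤ mφ * Real.sqrt (variance Δ ℙ) := by
    calc Real.sqrt (∫ ω, f ω ^ 2 ∂ℙ) ≤ Real.sqrt (mφ ^ 2 * variance Δ ℙ) :=
          Real.sqrt_le_sqrt hfbd
      _ = mφ * Real.sqrt (variance Δ ℙ) := by
          rw [Real.sqrt_mul (sq_nonneg _), Real.sqrt_sq hmφ]
  have hsqrtg : Real.sqrt (∫ ω, g ω ^ 2 ∂ℙ)
      ≤ Real.sqrt k * mΔ * Real.sqrt (variance Δ ℙ) := by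
    calc Real.sqrt (∫ ω, g ω ^ 2 ∂ℙ) ≤ Real.sqrt (mΔ ^ 2 * (k * variance Δ ℙ)) :=
          Real.sqrt_le_sqrt hgbd
      _ = Real.sqrt k * mΔ * Real.sqrt (variance Δ ℙ) := by
          rw [Real.sqrt_mul (sq_nonneg _), Real.sqrt_mul hk, Real.sqrt_sq hmΔ]
          ring
  have htri := sqrt_integral_add_sq_le f g hf hg
  have hsq : 0 ≤ Real.sqrt (variance Δ ℙ) := Real.sqrt_nonneg _
  calc Real.sqrt (variance (fun ω => P ω * Δ ω) ℙ)
      ≤ Real.sqrt (∫ ω, (f ω + g ω) ^ 2 ∂ℙ) := Real.sqrt_le_sqrt step1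
    _ ≤ Real.sqrt (∫ ω, f ω ^ 2 ∂ℙ) + Real.sqrt (∫ ω, g ω ^ 2 ∂ℙ) := htri
    _ ≤ mφ * Real.sqrt (variance Δ ℙ) + Real.sqrt k * mΔ * Real.sqrt (variance Δ ℙ) := by
        linarith
    _ ≤ (2 * mφ + Real.sqrt k * mΔ) * Real.sqrt (variance Δ ℙ) := by nlinarith
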